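/- Let N ≥ 3, let B₀ > 0 and B₁,…,B_N ∈ ℝ, and define f(x) = (Σ_{k=1}^N B_k x_k) e^{−B₀|x|²} on ℝ^N. Then ∫_{S^{N-1}} f(rσ) dσ = 0 for all r > 0, and equality holds: ∫_{ℝ^N}|∇f|² dx · ∫_{ℝ^N} f²|x|² dx = ((N+2)/2)² · (∫_{ℝ^N} f² dx)². -/

import Mathlib

open MeasureTheory Metric Filter

noncomputable section

/-- `|∇f|² = Σ_k (∂f/∂x_k)²` for a scalar field on `ℝ^N`. -/
def gradSqS {N : ℕ} (f : EuclideanSpace ℝ (Fin N) → ℝ)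
    (x : EuclideanSpace ℝ (Fin N)) : ℝ :=
  ∑ k, (fderiv ℝ f x (EuclideanSpace.single k 1)) ^ 2

/-- The standard surface measure on the unit sphere `S^{N-1} ⊂ ℝ^N`. -/
def sphereMeasure (N : ℕ) : Measure (sphere (0 : EuclideanSpace ℝ (Fin N)) 1) :=
  (volume : Measure (EuclideanSpace ℝ (Fin N))).toSphere

section Helpers
open Real Filter



lemma aux_abs_pow_le (x : ℝ) (n : ℕ) : |x| ^ n ≤ 1 + x ^ (2 * n) := by
  have hx : |x| ^ (2*n) = x ^ (2*n) := by
    rw [pow_mul, pow_mul, sq_abs]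
  rcases le_or_gt |x| 1 with h | h
  · have : |x| ^ n ≤ 1 := pow_le_one₀ (abs_nonneg x) h
    nlinarith [pow_nonneg (sq_nonneg x) n, pow_mul x 2 n]
  · have h2 : |x| ^ n ≤ |x| ^ (2*n) := pow_le_pow_right₀ h.le (by omega)
    rw [hx] at h2
    linarith

lemma aux_pow_le_exp {b : ℝ} (hb : 0 < b) (x : ℝ) (n : ℕ) :
    x ^ (2 * n) ≤ (n.factorial : ℝ) * (2 / b) ^ n * Real.exp (b / 2 * x ^ 2) := by
  have h := Real.pow_div_factorial_le_exp (x := b / 2 * x ^ 2) (by positivity) n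
  have hb2 : (0:ℝ) < (b/2)^n := by positivity
  have hexp : ((b/2) * x^2) ^ n = (b/2)^n * x^(2*n) := by
    rw [mul_pow, pow_mul]
  rw [hexp, div_le_iff₀ (by positivity : (0:ℝ) < (n.factorial : ℝ))] at h
  have h2b : (2 / b) ^ n * (b/2)^n = 1 := by
    rw [← mul_pow]; rw [div_mul_div_comm]; rw [mul_comm b 2]; simp [div_self, hb.ne']
  calc x ^ (2*n) = (2/b)^n * ((b/2)^n * x ^ (2*n)) := by
        rw [← mul_assoc, h2b, one_mul]
    _ ≤ (2/b)^n * (Real.exp (b/2*x^2) * n.factorial) := by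
        apply mul_le_mul_of_nonneg_left h (by positivity)
    _ = (n.factorial : ℝ) * (2 / b) ^ n * Real.exp (b / 2 * x ^ 2) := by ring

lemma integrable_pow_gauss {b : ℝ} (hb : 0 < b) (n : ℕ) :
    Integrable (fun x : ℝ => x ^ n * Real.exp (-b * x ^ 2)) := by
  have hmeas : AEStronglyMeasurable (fun x : ℝ => x ^ n * Real.exp (-b * x ^ 2)) volume := by
    apply Continuous.aestronglyMeasurable; continuity
  have hint : Integrable (fun x : ℝ => (1 + (n.factorial : ℝ) * (2/b)^n) * Real.exp (-(b/2) * x ^ 2)) :=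
    (integrable_exp_neg_mul_sq (by positivity)).const_mul _
  refine hint.mono' hmeas ?_
  filter_upwards with x
  rw [Real.norm_eq_abs, abs_mul, abs_pow, abs_of_pos (Real.exp_pos _)]
  have h1 := aux_abs_pow_le x n
  have h2 := aux_pow_le_exp hb x n
  have e1 : Real.exp (-b * x^2) ≤ Real.exp (-(b/2) * x^2) := by
    apply Real.exp_le_exp.2; nlinarith [sq_nonneg x]
  have e2 : Real.exp (b/2*x^2) * Real.exp (-b * x^2) = Real.exp (-(b/2) * x^2) := by
    rw [← Real.exp_add]; ring_nf
  have hexpos := Real.exp_pos (-b * x^2)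
  have hexpos2 := Real.exp_pos (-(b/2) * x^2)
  have hfpos : (0:ℝ) ≤ (n.factorial : ℝ) * (2/b)^n := by positivity
  calc |x| ^ n * Real.exp (-b * x ^ 2)
      ≤ (1 + x ^ (2*n)) * Real.exp (-b * x ^ 2) := by
        apply mul_le_mul_of_nonneg_right h1 hexpos.le
    _ ≤ Real.exp (-b*x^2) + ((n.factorial : ℝ) * (2/b)^n * Real.exp (b/2*x^2)) * Real.exp (-b*x^2) := by
        nlinarith
    _ ≤ (1 + (n.factorial : ℝ) * (2/b)^n) * Real.exp (-(b/2) * x ^ 2) := by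
        rw [mul_assoc, e2]
        nlinarith


lemma gauss_odd {b : ℝ} (n : ℕ) (hn : Odd n) :
    ∫ x : ℝ, x ^ n * Real.exp (-b * x ^ 2) = 0 := by
  have h := integral_neg_eq_self (fun x : ℝ => x ^ n * Real.exp (-b * x ^ 2)) (volume : Measure ℝ)
  simp only [hn.neg_pow, neg_sq, neg_mul, integral_neg] at h
  simp only [neg_mul]
  linarith

lemma tendsto_pow_gauss_atTop {b : ℝ} (hb : 0 < b) (n : ℕ) :
    Tendsto (fun x : ℝ => x ^ n * Real.exp (-b * x ^ 2)) atTop (nhds 0) := by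
  have h := rpow_mul_exp_neg_mul_sq_isLittleO_exp_neg hb (n : ℝ)
  have hd : Tendsto (fun x : ℝ => Real.exp (-(1/2) * x)) atTop (nhds 0) := by
    have := Real.tendsto_exp_neg_atTop_nhds_zero.comp (tendsto_id.atTop_div_const (by norm_num : (0:ℝ) < 2))
    apply this.congr; intro x; simp [Function.comp]; ring_nf
  have h2 : Tendsto (fun x : ℝ => x ^ (n : ℝ) * Real.exp (-b * x ^ 2)) atTop (nhds 0) :=
    h.trans_tendsto hd
  apply h2.congr'
  filter_upwards [eventually_gt_atTop (0:ℝ)] with x hx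
  rw [Real.rpow_natCast]

lemma tendsto_pow_gauss_atBot {b : ℝ} (hb : 0 < b) (n : ℕ) :
    Tendsto (fun x : ℝ => x ^ n * Real.exp (-b * x ^ 2)) atBot (nhds 0) := by
  have h := (tendsto_pow_gauss_atTop hb n).comp tendsto_neg_atBot_atTop
  have h2 : Tendsto (fun x : ℝ => (-x) ^ n * Real.exp (-b * x ^ 2)) atBot (nhds 0) := by
    apply h.congr; intro x; simp [neg_sq]
  rcases Nat.even_or_odd n with he | ho
  · apply h2.congr; intro x; rw [he.neg_pow]
  · have := h2.neg
    rw [neg_zero] at this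
    apply this.congr; intro x; rw [ho.neg_pow]; ring

lemma gauss_rec {b : ℝ} (hb : 0 < b) (n : ℕ) :
    ∫ x : ℝ, x ^ (n + 2) * Real.exp (-b * x ^ 2) =
      ((n : ℝ) + 1) / (2 * b) * ∫ x : ℝ, x ^ n * Real.exp (-b * x ^ 2) := by
  set F : ℝ → ℝ := fun x => x ^ (n + 1) * Real.exp (-b * x ^ 2) with hF
  set F' : ℝ → ℝ := fun x =>
    ((n : ℝ) + 1) * (x ^ n * Real.exp (-b * x ^ 2)) - 2 * b * (x ^ (n + 2) * Real.exp (-b * x ^ 2))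
    with hF'
  have hderiv : ∀ x : ℝ, HasDerivAt F (F' x) x := by
    intro x
    have h1 : HasDerivAt (fun x : ℝ => -b * x ^ 2) (-b * (2 * x ^ 1)) x :=
      (hasDerivAt_pow 2 x).const_mul (-b)
    have h2 := h1.exp
    have h3 := (hasDerivAt_pow (n + 1) x).fun_mul h2
    convert h3 using 1
    · rfl
    · rfl
    simp only [hF']
    push_cast
    ring
  have hFint : Integrable F' := by
    apply Integrable.sub
    · exact ((integrable_pow_gauss hb n).const_mul _)
    · exact ((integrable_pow_gauss hb (n+2)).const_mul _)
  have htop : Tendsto F atTop (nhds 0) := tendsto_pow_gauss_atTop hb (n+1)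
  have hbot : Tendsto F atBot (nhds 0) := tendsto_pow_gauss_atBot hb (n+1)
  have hIoi : ∫ x in Set.Ioi (0:ℝ), F' x = 0 - F 0 :=
    integral_Ioi_of_hasDerivAt_of_tendsto' (fun x _ => hderiv x) hFint.integrableOn htop
  have hIic : ∫ x in Set.Iic (0:ℝ), F' x = F 0 - 0 :=
    integral_Iic_of_hasDerivAt_of_tendsto' (fun x _ => hderiv x) hFint.integrableOn hbot
  have hsplit : ∫ x : ℝ, F' x = (∫ x in Set.Iic (0:ℝ), F' x) + ∫ x in Set.Ioi (0:ℝ), F' x := by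
    rw [← setIntegral_union (Set.Iic_disjoint_Ioi le_rfl) measurableSet_Ioi
      hFint.integrableOn hFint.integrableOn, Set.Iic_union_Ioi, setIntegral_univ]
  have hzero : ∫ x : ℝ, F' x = 0 := by rw [hsplit, hIoi, hIic]; ring
  rw [hF'] at hzero
  rw [integral_sub ((integrable_pow_gauss hb n).const_mul _)
    ((integrable_pow_gauss hb (n+2)).const_mul _), integral_const_mul, integral_const_mul] at hzero
  have h2b : (2 * b) ≠ 0 := by positivity
  simp only [neg_mul] at hzero ⊢
  field_simp
  linarith


noncomputable def Jg (b : ℝ) (n : ℕ) : ℝ := ∫ x : ℝ, x ^ n * Real.exp (-b * x ^ 2)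

lemma Jg_odd {b : ℝ} {n : ℕ} (hn : Odd n) : Jg b n = 0 := gauss_odd n hn

lemma gauss_master {N : ℕ} (b : ℝ) (m : Fin N → ℕ) :
    ∫ y : Fin N → ℝ, ∏ i, ((y i) ^ (m i) * Real.exp (-b * (y i) ^ 2)) = ∏ i, Jg b (m i) :=
  integral_fintype_prod_eq_prod (fun i t => t ^ (m i) * Real.exp (-b * t ^ 2))

lemma gauss_master_int {N : ℕ} {b : ℝ} (hb : 0 < b) (m : Fin N → ℕ) :
    Integrable (fun y : Fin N → ℝ => ∏ i, ((y i) ^ (m i) * Real.exp (-b * (y i) ^ 2))) :=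
  Integrable.fintype_prod (fun i => integrable_pow_gauss hb (m i))

lemma prod_if_single {N : ℕ} (j : Fin N) (c d : ℝ) :
    ∏ i, (if i = j then c else d) = c * d ^ (N - 1) := by
  rw [← Finset.mul_prod_erase Finset.univ _ (Finset.mem_univ j), if_pos rfl]
  congr 1
  rw [Finset.prod_congr rfl (fun i hi => if_neg (Finset.ne_of_mem_erase hi)),
    Finset.prod_const, Finset.card_erase_of_mem (Finset.mem_univ j), Finset.card_univ,
    Fintype.card_fin]

lemma prod_if_pair {N : ℕ} (i j : Fin N) (h : i ≠ j) (c d : ℝ) :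
    ∏ l, (if l = j then c else if l = i then c else d) = c ^ 2 * d ^ (N - 2) := by
  rw [← Finset.mul_prod_erase Finset.univ _ (Finset.mem_univ j), if_pos rfl]
  have hi : i ∈ Finset.univ.erase j := Finset.mem_erase.2 ⟨h, Finset.mem_univ i⟩
  rw [← Finset.mul_prod_erase _ _ hi, if_neg h, if_pos rfl]
  have : ∀ l ∈ (Finset.univ.erase j).erase i,
      (if l = j then c else if l = i then c else d) = d := by
    intro l hl
    rw [if_neg (Finset.ne_of_mem_erase (Finset.mem_of_mem_erase hl)),
      if_neg (Finset.ne_of_mem_erase hl)]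
  rw [Finset.prod_congr rfl this, Finset.prod_const,
    Finset.card_erase_of_mem hi, Finset.card_erase_of_mem (Finset.mem_univ j),
    Finset.card_univ, Fintype.card_fin]
  have h2 : N - 1 - 1 = N - 2 := by omega
  rw [h2]; ring

def eD {N : ℕ} (j k i : Fin N) : ℕ := (if i = j then 1 else 0) + (if i = k then 1 else 0)

lemma keyD {N : ℕ} (b : ℝ) (B : Fin N → ℝ) :
    (fun y : Fin N → ℝ => (∑ j, B j * y j) ^ 2 * ∏ i, Real.exp (-b * (y i) ^ 2))
      = fun y => ∑ j, ∑ k, (B j * B k) *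
          ∏ i, ((y i) ^ (eD j k i) * Real.exp (-b * (y i) ^ 2)) := by
    funext y
    have hprod : ∀ j k : Fin N, ∏ i, ((y i) ^ (eD j k i) * Real.exp (-b * (y i) ^ 2))
        = (y j * y k) * ∏ i, Real.exp (-b * (y i) ^ 2) := by
      intro j k
      rw [Finset.prod_mul_distrib]
      congr 1
      simp only [eD, pow_add]
      rw [Finset.prod_mul_distrib]
      congr 1 <;> simp [Finset.prod_ite_eq']
    simp_rw [hprod]
    rw [sq, Finset.sum_mul_sum]
    rw [Finset.sum_mul]
    congr 1; funext j
    rw [Finset.sum_mul]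
    congr 1; funext k
    ring

lemma pi_D_int {N : ℕ} {b : ℝ} (hb : 0 < b) (B : Fin N → ℝ) :
    Integrable (fun y : Fin N → ℝ =>
      (∑ j, B j * y j) ^ 2 * ∏ i, Real.exp (-b * (y i) ^ 2)) := by
  rw [keyD b B]
  exact integrable_finset_sum _ (fun j _ => integrable_finset_sum _
    (fun k _ => ((gauss_master_int hb (eD j k)).const_mul _)))

lemma pi_D {N : ℕ} {b : ℝ} (hb : 0 < b) (B : Fin N → ℝ) :
    ∫ y : Fin N → ℝ, (∑ j, B j * y j) ^ 2 * ∏ i, Real.exp (-b * (y i) ^ 2)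
      = (∑ j, (B j) ^ 2) * (Jg b 2 * Jg b 0 ^ (N - 1)) := by
  have key := keyD b B
  rw [key, integral_finset_sum _ (fun j _ => integrable_finset_sum _
    (fun k _ => ((gauss_master_int hb (eD j k)).const_mul _)))]
  have step : ∀ j : Fin N, ∫ y : Fin N → ℝ, ∑ k, (B j * B k) *
      ∏ i, ((y i) ^ (eD j k i) * Real.exp (-b * (y i) ^ 2))
      = ∑ k, (B j * B k) * ∏ i, Jg b (eD j k i) := by
    intro j
    rw [integral_finset_sum _ (fun k _ => ((gauss_master_int hb (eD j k)).const_mul _))]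
    congr 1; funext k
    rw [integral_const_mul, gauss_master]
  rw [Finset.sum_congr rfl (fun j _ => step j)]
  have eval : ∀ j : Fin N, ∑ k, (B j * B k) * ∏ i, Jg b (eD j k i)
      = (B j) ^ 2 * (Jg b 2 * Jg b 0 ^ (N - 1)) := by
    intro j
    rw [Finset.sum_eq_single j]
    · have : ∀ i : Fin N, Jg b (eD j j i) = if i = j then Jg b 2 else Jg b 0 := by
        intro i; simp only [eD]; split_ifs <;> norm_num
      rw [Finset.prod_congr rfl (fun i _ => this i), prod_if_single]
      ring
    · intro k _ hk
      have : Jg b (eD j k k) = 0 := by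
        apply Jg_odd
        simp only [eD, if_neg (fun h => hk h : ¬ k = j), if_pos rfl]
        norm_num
      rw [Finset.prod_eq_zero (Finset.mem_univ k) this, mul_zero]
    · intro h; exact absurd (Finset.mem_univ j) h
  rw [Finset.sum_congr rfl (fun j _ => eval j), ← Finset.sum_mul]


lemma sum_if_single {N : ℕ} (j : Fin N) (c d : ℝ) :
    ∑ i, (if i = j then c else d) = c + (N - 1 : ℕ) * d := by
  rw [← Finset.add_sum_erase Finset.univ _ (Finset.mem_univ j), if_pos rfl]
  congr 1
  rw [Finset.sum_congr rfl (fun i hi => if_neg (Finset.ne_of_mem_erase hi)),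
    Finset.sum_const, Finset.card_erase_of_mem (Finset.mem_univ j), Finset.card_univ,
    Fintype.card_fin, nsmul_eq_mul]

def eC {N : ℕ} (j k i l : Fin N) : ℕ :=
  (if l = j then 1 else 0) + (if l = k then 1 else 0) + 2 * (if l = i then 1 else 0)

lemma keyC {N : ℕ} (b : ℝ) (B : Fin N → ℝ) :
    (fun y : Fin N → ℝ =>
        (∑ j, B j * y j) ^ 2 * (∑ i, (y i) ^ 2) * ∏ l, Real.exp (-b * (y l) ^ 2))
      = fun y => ∑ j, ∑ k, ∑ i, (B j * B k) *
          ∏ l, ((y l) ^ (eC j k i l) * Real.exp (-b * (y l) ^ 2)) := by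
    funext y
    have hprod : ∀ j k i : Fin N, ∏ l, ((y l) ^ (eC j k i l) * Real.exp (-b * (y l) ^ 2))
        = (y j * y k * (y i) ^ 2) * ∏ l, Real.exp (-b * (y l) ^ 2) := by
      intro j k i
      have hl : ∀ l : Fin N, (y l) ^ (eC j k i l) * Real.exp (-b * (y l) ^ 2)
          = (if l = j then y l else 1) * ((if l = k then y l else 1) *
            ((if l = i then (y l) ^ 2 else 1) * Real.exp (-b * (y l) ^ 2))) := by
        intro l
        simp only [eC]
        split_ifs <;> norm_num <;> ring
      rw [Finset.prod_congr rfl (fun l _ => hl l), Finset.prod_mul_distrib,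
        Finset.prod_mul_distrib, Finset.prod_mul_distrib]
      simp [Finset.prod_ite_eq']
      ring
    simp_rw [hprod]
    rw [sq (∑ j, B j * y j), Finset.sum_mul_sum]
    rw [Finset.sum_mul, Finset.sum_mul]
    congr 1; funext j
    rw [Finset.sum_mul, Finset.sum_mul]
    congr 1; funext k
    rw [Finset.mul_sum, Finset.sum_mul]
    congr 1; funext i
    ring

lemma pi_C_int {N : ℕ} {b : ℝ} (hb : 0 < b) (B : Fin N → ℝ) :
    Integrable (fun y : Fin N → ℝ =>
      (∑ j, B j * y j) ^ 2 * (∑ i, (y i) ^ 2) * ∏ l, Real.exp (-b * (y l) ^ 2)) := by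
  rw [keyC b B]
  exact integrable_finset_sum _ (fun j _ => integrable_finset_sum _
    (fun k _ => integrable_finset_sum _
      (fun i _ => ((gauss_master_int hb (eC j k i)).const_mul _))))

lemma pi_C {N : ℕ} {b : ℝ} (hb : 0 < b) (B : Fin N → ℝ) :
    ∫ y : Fin N → ℝ, (∑ j, B j * y j) ^ 2 * (∑ i, (y i) ^ 2) * ∏ l, Real.exp (-b * (y l) ^ 2)
      = (∑ j, (B j) ^ 2) *
        (Jg b 4 * Jg b 0 ^ (N - 1) + (N - 1 : ℕ) * (Jg b 2 ^ 2 * Jg b 0 ^ (N - 2))) := by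
  have key := keyC b B
  rw [key, integral_finset_sum _ (fun j _ => integrable_finset_sum _
    (fun k _ => integrable_finset_sum _
      (fun i _ => ((gauss_master_int hb (eC j k i)).const_mul _))))]
  have step : ∀ j : Fin N, ∫ y : Fin N → ℝ, ∑ k, ∑ i, (B j * B k) *
      ∏ l, ((y l) ^ (eC j k i l) * Real.exp (-b * (y l) ^ 2))
      = ∑ k, ∑ i, (B j * B k) * ∏ l, Jg b (eC j k i l) := by
    intro j
    rw [integral_finset_sum _ (fun k _ => integrable_finset_sum _
      (fun i _ => ((gauss_master_int hb (eC j k i)).const_mul _)))]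
    congr 1; funext k
    rw [integral_finset_sum _ (fun i _ => ((gauss_master_int hb (eC j k i)).const_mul _))]
    congr 1; funext i
    rw [integral_const_mul, gauss_master]
  rw [Finset.sum_congr rfl (fun j _ => step j)]
  have eval : ∀ j : Fin N, ∑ k, ∑ i, (B j * B k) * ∏ l, Jg b (eC j k i l)
      = (B j) ^ 2 * (Jg b 4 * Jg b 0 ^ (N - 1) + (N - 1 : ℕ) * (Jg b 2 ^ 2 * Jg b 0 ^ (N - 2))) := by
    intro j
    rw [Finset.sum_eq_single j]
    · have inner : ∀ i : Fin N, ∏ l, Jg b (eC j j i l)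
          = if i = j then Jg b 4 * Jg b 0 ^ (N - 1) else Jg b 2 ^ 2 * Jg b 0 ^ (N - 2) := by
        intro i
        by_cases hij : i = j
        · rw [if_pos hij]
          subst hij
          have hval : ∀ l : Fin N, Jg b (eC i i i l) = if l = i then Jg b 4 else Jg b 0 := by
            intro l; simp only [eC]; by_cases h : l = i <;> simp [h]
          rw [Finset.prod_congr rfl (fun l _ => hval l), prod_if_single]
        · rw [if_neg hij]
          have hval : ∀ l : Fin N, Jg b (eC j j i l)
              = if l = j then Jg b 2 else if l = i then Jg b 2 else Jg b 0 := by
            intro l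
            have hji : ¬ j = i := fun h => hij h.symm
            simp only [eC]
            by_cases h1 : l = j <;> by_cases h2 : l = i
            · exact absurd (h2.symm.trans h1) hij
            · simp [h1, h2, hji]
            · simp [h1, h2, hij]
            · simp [h1, h2]
          rw [Finset.prod_congr rfl (fun l _ => hval l), prod_if_pair i j hij]
      have : ∀ i : Fin N, (B j * B j) * ∏ l, Jg b (eC j j i l)
          = (B j) ^ 2 * (if i = j then Jg b 4 * Jg b 0 ^ (N - 1)
              else Jg b 2 ^ 2 * Jg b 0 ^ (N - 2)) := by
        intro i; rw [inner i]; ring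
      rw [Finset.sum_congr rfl (fun i _ => this i), ← Finset.mul_sum, sum_if_single]
    · intro k _ hkj
      apply Finset.sum_eq_zero
      intro i _
      have : Jg b (eC j k i k) = 0 := by
        apply Jg_odd
        simp only [eC, if_neg hkj, if_pos rfl]
        split_ifs <;> decide
      rw [Finset.prod_eq_zero (Finset.mem_univ k) this, mul_zero]
    · intro h; exact absurd (Finset.mem_univ j) h
  rw [Finset.sum_congr rfl (fun j _ => eval j), ← Finset.sum_mul]

lemma euclid_norm_sq {N : ℕ} (x : EuclideanSpace ℝ (Fin N)) : ‖x‖ ^ 2 = ∑ i, (x i) ^ 2 := by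
  rw [EuclideanSpace.norm_eq, Real.sq_sqrt (by positivity)]
  congr 1; funext i; rw [Real.norm_eq_abs, sq_abs]

lemma fderiv_formula {N : ℕ} (B₀ : ℝ) (B : Fin N → ℝ) (x : EuclideanSpace ℝ (Fin N)) (k : Fin N) :
    fderiv ℝ (fun x : EuclideanSpace ℝ (Fin N) =>
        (∑ j, B j * x j) * Real.exp (-B₀ * ‖x‖ ^ 2)) x (EuclideanSpace.single k 1)
    = (B k - 2 * B₀ * (∑ j, B j * x j) * x k) * Real.exp (-B₀ * ‖x‖ ^ 2) := by
  have hfun : (fun x : EuclideanSpace ℝ (Fin N) => (∑ j, B j * x j) * Real.exp (-B₀ * ‖x‖ ^ 2))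
      = fun x => (∑ j, B j * (EuclideanSpace.proj j x)) *
          Real.exp (-B₀ * ∑ i, (EuclideanSpace.proj i x) * (EuclideanSpace.proj i x)) := by
    funext x
    have hs : ∑ i, (x i) ^ 2
        = ∑ i, (EuclideanSpace.proj i x) * (EuclideanSpace.proj i x) :=
      Finset.sum_congr rfl fun i _ => sq (x i)
    rw [euclid_norm_sq, hs]
    rfl
  have hg : HasFDerivAt (fun x : EuclideanSpace ℝ (Fin N) => ∑ j, B j * (EuclideanSpace.proj j x))
      (∑ j, B j • (EuclideanSpace.proj j : EuclideanSpace ℝ (Fin N) →L[ℝ] ℝ)) x :=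
    HasFDerivAt.fun_sum fun j _ =>
      ((EuclideanSpace.proj j : EuclideanSpace ℝ (Fin N) →L[ℝ] ℝ).hasFDerivAt
        (x := x)).const_mul (B j)
  have hq : HasFDerivAt
      (fun x : EuclideanSpace ℝ (Fin N) =>
        ∑ i, (EuclideanSpace.proj i x) * (EuclideanSpace.proj i x))
      (∑ i, ((EuclideanSpace.proj i x) •
          (EuclideanSpace.proj i : EuclideanSpace ℝ (Fin N) →L[ℝ] ℝ) +
        (EuclideanSpace.proj i x) •
          (EuclideanSpace.proj i : EuclideanSpace ℝ (Fin N) →L[ℝ] ℝ))) x :=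
    HasFDerivAt.fun_sum fun i _ =>
      ((EuclideanSpace.proj i : EuclideanSpace ℝ (Fin N) →L[ℝ] ℝ).hasFDerivAt (x := x)).fun_mul
        ((EuclideanSpace.proj i : EuclideanSpace ℝ (Fin N) →L[ℝ] ℝ).hasFDerivAt (x := x))
  have hh := ((hq.const_mul (-B₀)).exp)
  have hfull := hg.fun_mul hh
  rw [hfun, hfull.fderiv]
  simp only [ContinuousLinearMap.add_apply, ContinuousLinearMap.smul_apply,
    ContinuousLinearMap.coe_sum', Finset.sum_apply, ContinuousLinearMap.coe_smul', Pi.smul_apply,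
    Pi.add_apply, smul_eq_mul, EuclideanSpace.proj, PiLp.proj_apply,
    EuclideanSpace.single_apply, mul_ite, mul_one, mul_zero, Finset.sum_add_distrib, Finset.sum_ite_eq',
    Finset.mem_univ, if_pos, add_zero, ite_true]
  rw [euclid_norm_sq]
  have : ∑ i, (x i) ^ 2 = ∑ i, x i * x i := Finset.sum_congr rfl fun i _ => sq (x i)
  rw [this]
  ring



lemma sphere_odd_integral_zero {N : ℕ} (g : EuclideanSpace ℝ (Fin N) → ℝ)
    (hg : Continuous g) (hodd : ∀ x, g (-x) = -g x) :
    ∫ σ : sphere (0 : EuclideanSpace ℝ (Fin N)) 1,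
      g (σ : EuclideanSpace ℝ (Fin N)) ∂(sphereMeasure N) = 0 := by
  set n : sphere (0 : EuclideanSpace ℝ (Fin N)) 1 → sphere (0 : EuclideanSpace ℝ (Fin N)) 1 :=
    fun σ => ⟨-σ.1, by
      have := σ.2
      simp only [mem_sphere_iff_norm, sub_zero] at this ⊢
      simpa using this⟩ with hn
  have hninv : Function.Involutive n := by
    intro σ; apply Subtype.ext; simp [hn]
  have hcont_n : Continuous n := Continuous.subtype_mk (continuous_subtype_val.neg) _
  have hmeas_n : Measurable n := hcont_n.measurable
  have hmap : (sphereMeasure N).map n = sphereMeasure N := by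
    apply Measure.ext
    intro s hs
    rw [Measure.map_apply hmeas_n hs]
    rw [sphereMeasure, Measure.toSphere_apply' _ (hmeas_n hs), Measure.toSphere_apply' _ hs]
    congr 1
    have himg : Subtype.val '' (n ⁻¹' s) = -(Subtype.val '' s) := by
      ext z
      simp only [Set.mem_image, Set.mem_preimage, Set.mem_neg]
      constructor
      · rintro ⟨σ, hσ, rfl⟩
        exact ⟨n σ, hσ, by simp [hn]⟩
      · rintro ⟨τ, hτ, hz⟩
        refine ⟨n τ, ?_, ?_⟩
        · rw [hninv τ]; exact hτ
        · simp only [hn]; rw [hz]; simp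
    rw [himg, Set.smul_neg]
    exact Measure.measure_neg volume _
  have hgs : Continuous (fun σ : sphere (0 : EuclideanSpace ℝ (Fin N)) 1 =>
      g (σ : EuclideanSpace ℝ (Fin N))) := hg.comp continuous_subtype_val
  have h2 : ∀ σ : sphere (0 : EuclideanSpace ℝ (Fin N)) 1,
      g ((n σ : sphere (0 : EuclideanSpace ℝ (Fin N)) 1) : EuclideanSpace ℝ (Fin N))
        = -g (σ : EuclideanSpace ℝ (Fin N)) := by
    intro σ; simp only [hn]; exact hodd σ.1
  have h3 : ∫ σ : sphere (0 : EuclideanSpace ℝ (Fin N)) 1,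
      g (σ : EuclideanSpace ℝ (Fin N)) ∂(sphereMeasure N)
      = -∫ σ : sphere (0 : EuclideanSpace ℝ (Fin N)) 1,
          g (σ : EuclideanSpace ℝ (Fin N)) ∂(sphereMeasure N) := by
    conv_lhs => rw [← hmap]
    rw [integral_map hmeas_n.aemeasurable hgs.aestronglyMeasurable]
    rw [integral_congr_ae (Filter.Eventually.of_forall h2), integral_neg]
  linarith
lemma measEquiv_symm_apply {N : ℕ} (y : Fin N → ℝ) (k : Fin N) :
    (((MeasurableEquiv.toLp 2 (Fin N → ℝ)).symm).symm y) k = y k := rfl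

lemma transfer_integral {N : ℕ} (g : EuclideanSpace ℝ (Fin N) → ℝ) :
    ∫ x, g x = ∫ y : Fin N → ℝ, g (((MeasurableEquiv.toLp 2 (Fin N → ℝ)).symm).symm y) :=
  ((MeasurePreserving.symm _ (EuclideanSpace.volume_preserving_symm_measurableEquiv_toLp (Fin N))).integral_comp
    (MeasurableEquiv.measurableEmbedding _) g).symm

lemma transfer_integrable {N : ℕ} (g : EuclideanSpace ℝ (Fin N) → ℝ)
    (h : Integrable (fun y : Fin N → ℝ =>
      g (((MeasurableEquiv.toLp 2 (Fin N → ℝ)).symm).symm y))) : Integrable g := by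
  rw [← (MeasurePreserving.symm _ (EuclideanSpace.volume_preserving_symm_measurableEquiv_toLp (Fin N))).integrable_comp_emb
    (MeasurableEquiv.measurableEmbedding _)]
  exact h

end Helpers

/-- The function `f(x) = (Σ_k B_k x_k) e^{-B₀|x|²}` has zero spherical mean on every
sphere and attains equality in the uncertainty principle inequality with constant
`((N+2)/2)²`. -/
theorem stmt_7 (N : ℕ) (hN : 3 ≤ N) (B₀ : ℝ) (hB₀ : 0 < B₀) (B : Fin N → ℝ)
    (f : EuclideanSpace ℝ (Fin N) → ℝ)
    (hf : f = fun x => (∑ k, B k * x k) * Real.exp (-B₀ * ‖x‖ ^ 2)) :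
    (∀ r : ℝ, 0 < r →
      (∫ σ : sphere (0 : EuclideanSpace ℝ (Fin N)) 1,
        f (r • (σ : EuclideanSpace ℝ (Fin N))) ∂(sphereMeasure N)) = 0) ∧
    (∫ x, gradSqS f x) * (∫ x, (f x) ^ 2 * ‖x‖ ^ 2) =
      (((N : ℝ) + 2) / 2) ^ 2 * (∫ x, (f x) ^ 2) ^ 2 := by
  obtain ⟨M, rfl⟩ : ∃ M, N = M + 3 := ⟨N - 3, by omega⟩
  have ha : (0:ℝ) < 2 * B₀ := by linarith
  have hfc : Continuous f := by
    rw [hf]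
    apply Continuous.mul
    · exact continuous_finset_sum _ fun k _ =>
        (continuous_const.mul (EuclideanSpace.proj k).continuous)
    · exact Real.continuous_exp.comp (continuous_const.mul (continuous_norm.pow 2))
  have hfodd : ∀ z, f (-z) = -f z := by
    intro z
    rw [hf]
    simp only [norm_neg]
    have h1 : ∀ k : Fin (M+3), B k * ((-z) k) = -(B k * z k) := fun k => by
      show B k * (-(z k)) = -(B k * z k); ring
    rw [Finset.sum_congr rfl fun k _ => h1 k, Finset.sum_neg_distrib, neg_mul]
  constructor
  · intro r hr
    exact sphere_odd_integral_zero (fun x => f (r • x))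
      (hfc.comp (continuous_const_smul r))
      (fun x => by show f (r • (-x)) = -f (r • x); rw [smul_neg, hfodd])
  · -- Pi-side descriptions
    have hfphi : ∀ y : Fin (M+3) → ℝ,
        f (((MeasurableEquiv.toLp 2 (Fin (M+3) → ℝ)).symm).symm y)
          = (∑ j, B j * y j) * Real.exp (-B₀ * ∑ i, (y i) ^ 2) := by
      intro y
      rw [hf]
      show (∑ j, B j * y j) * Real.exp
        (-B₀ * ‖((MeasurableEquiv.toLp 2 (Fin (M+3) → ℝ)).symm).symm y‖ ^ 2) = _
      rw [euclid_norm_sq]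
      rfl
    have hDfun : (fun y : Fin (M+3) → ℝ =>
        (f (((MeasurableEquiv.toLp 2 (Fin (M+3) → ℝ)).symm).symm y)) ^ 2)
        = fun y => (∑ j, B j * y j) ^ 2 * ∏ i, Real.exp (-(2*B₀) * (y i) ^ 2) := by
      funext y
      rw [hfphi y, mul_pow, sq (Real.exp _), ← Real.exp_add]
      have h2 : -B₀ * (∑ i, (y i) ^ 2) + -B₀ * (∑ i, (y i) ^ 2)
          = ∑ i, (-(2*B₀) * (y i) ^ 2) := by
        rw [← Finset.mul_sum]; ring
      rw [h2, Real.exp_sum]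
    have hCfun : (fun y : Fin (M+3) → ℝ =>
        (f (((MeasurableEquiv.toLp 2 (Fin (M+3) → ℝ)).symm).symm y)) ^ 2
          * ‖(((MeasurableEquiv.toLp 2 (Fin (M+3) → ℝ)).symm).symm y :
              EuclideanSpace ℝ (Fin (M+3)))‖ ^ 2)
        = fun y => (∑ j, B j * y j) ^ 2 * (∑ i, (y i) ^ 2)
            * ∏ l, Real.exp (-(2*B₀) * (y l) ^ 2) := by
      funext y
      rw [congrFun hDfun y, euclid_norm_sq]
      show _ * (∑ i : Fin (M+3), (y i) ^ 2) = _
      ring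
    have hEfun : (fun y : Fin (M+3) → ℝ => Real.exp
        (-(2*B₀) * ‖(((MeasurableEquiv.toLp 2 (Fin (M+3) → ℝ)).symm).symm y :
            EuclideanSpace ℝ (Fin (M+3)))‖ ^ 2))
        = fun y => ∏ i, ((y i) ^ (0:ℕ) * Real.exp (-(2*B₀) * (y i) ^ 2)) := by
      funext y
      rw [euclid_norm_sq]
      show Real.exp (-(2*B₀) * ∑ i : Fin (M+3), (y i) ^ 2) = _
      simp only [pow_zero, one_mul]
      rw [Finset.mul_sum, Real.exp_sum]
    -- integral values
    have hD : ∫ x, (f x) ^ 2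
        = (∑ j, (B j) ^ 2) * (Jg (2*B₀) 2 * Jg (2*B₀) 0 ^ (M+2)) := by
      have e1 : M + 3 - 1 = M + 2 := by omega
      rw [transfer_integral (fun x => (f x) ^ 2), hDfun, pi_D ha B, e1]
    have hC : ∫ x, (f x) ^ 2 * ‖x‖ ^ 2
        = (∑ j, (B j) ^ 2) * (Jg (2*B₀) 4 * Jg (2*B₀) 0 ^ (M+2)
            + ((M+2 : ℕ) : ℝ) * (Jg (2*B₀) 2 ^ 2 * Jg (2*B₀) 0 ^ (M+1))) := by
      have e1 : M + 3 - 1 = M + 2 := by omega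
      have e2 : M + 3 - 2 = M + 1 := by omega
      rw [transfer_integral (fun x => (f x) ^ 2 * ‖x‖ ^ 2), hCfun, pi_C ha B, e1, e2]
    have hIE : ∫ x : EuclideanSpace ℝ (Fin (M+3)), Real.exp (-(2*B₀) * ‖x‖ ^ 2)
        = Jg (2*B₀) 0 ^ (M+3) := by
      rw [transfer_integral (fun x : EuclideanSpace ℝ (Fin (M+3)) =>
        Real.exp (-(2*B₀) * ‖x‖ ^ 2)), hEfun, gauss_master (2*B₀) (fun _ => 0)]
      simp [Finset.prod_const]
    -- integrability
    have iE : Integrable (fun x : EuclideanSpace ℝ (Fin (M+3)) =>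
        Real.exp (-(2*B₀) * ‖x‖ ^ 2)) := by
      apply transfer_integrable
      rw [hEfun]
      exact gauss_master_int ha (fun _ => 0)
    have if2 : Integrable (fun x : EuclideanSpace ℝ (Fin (M+3)) => (f x) ^ 2) := by
      apply transfer_integrable
      rw [hDfun]
      exact pi_D_int ha B
    have ifC : Integrable (fun x : EuclideanSpace ℝ (Fin (M+3)) =>
        (f x) ^ 2 * ‖x‖ ^ 2) := by
      apply transfer_integrable
      rw [hCfun]
      exact pi_C_int ha B
    -- pointwise gradient identity
    have hgrad : ∀ x, gradSqS f x
        = ((∑ k, (B k) ^ 2) * Real.exp (-(2*B₀) * ‖x‖ ^ 2) - 4*B₀*((f x) ^ 2))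
            + 4*B₀^2*((f x) ^ 2 * ‖x‖ ^ 2) := by
      intro x
      have hfd : ∀ k, fderiv ℝ f x (EuclideanSpace.single k 1)
          = (B k - 2*B₀*(∑ j, B j * x j) * x k) * Real.exp (-B₀ * ‖x‖ ^ 2) := by
        intro k; rw [hf]; exact fderiv_formula B₀ B x k
      simp only [gradSqS]
      rw [Finset.sum_congr rfl fun k _ => by rw [hfd k]]
      have hterm : ∀ k : Fin (M+3),
          ((B k - 2*B₀*(∑ j, B j * x j) * x k) * Real.exp (-B₀ * ‖x‖ ^ 2)) ^ 2
          = (Real.exp (-B₀ * ‖x‖ ^ 2) ^ 2) * (B k) ^ 2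
            + (-(4*B₀*(∑ j, B j * x j) * Real.exp (-B₀ * ‖x‖ ^ 2) ^ 2)) * (B k * x k)
            + (4*B₀^2*(∑ j, B j * x j) ^ 2 * Real.exp (-B₀ * ‖x‖ ^ 2) ^ 2) * ((x k) ^ 2) := by
        intro k; ring
      rw [Finset.sum_congr rfl fun k _ => hterm k, Finset.sum_add_distrib,
        Finset.sum_add_distrib, ← Finset.mul_sum, ← Finset.mul_sum, ← Finset.mul_sum,
        ← euclid_norm_sq x]
      have hfx : f x = (∑ j, B j * x j) * Real.exp (-B₀ * ‖x‖ ^ 2) := by rw [hf]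
      have he2 : Real.exp (-(2*B₀) * ‖x‖ ^ 2) = Real.exp (-B₀ * ‖x‖ ^ 2) ^ 2 := by
        rw [sq (Real.exp (-B₀ * ‖x‖ ^ 2)), ← Real.exp_add]; congr 1; ring
      rw [hfx, he2]
      ring
    have hA : ∫ x, gradSqS f x
        = (∑ k, (B k) ^ 2) * Jg (2*B₀) 0 ^ (M+3) - 4*B₀*(∫ x, (f x) ^ 2)
            + 4*B₀^2*(∫ x, (f x) ^ 2 * ‖x‖ ^ 2) := by
      have hfun2 : (fun x => gradSqS f x)
          = fun x => ((∑ k, (B k) ^ 2) * Real.exp (-(2*B₀) * ‖x‖ ^ 2)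
              - 4*B₀*((f x) ^ 2)) + 4*B₀^2*((f x) ^ 2 * ‖x‖ ^ 2) := funext hgrad
      have i1 : Integrable (fun x : EuclideanSpace ℝ (Fin (M+3)) =>
          (∑ k, (B k) ^ 2) * Real.exp (-(2*B₀) * ‖x‖ ^ 2) - 4*B₀*((f x) ^ 2)) :=
        (iE.const_mul _).sub (if2.const_mul _)
      rw [hfun2, integral_add i1 (ifC.const_mul _),
        integral_sub (iE.const_mul _) (if2.const_mul _),
        integral_const_mul, integral_const_mul, integral_const_mul, hIE]
    -- moment relations
    have hc2 : Jg (2*B₀) 2 = 1/(2*(2*B₀)) * Jg (2*B₀) 0 := by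
      have h := gauss_rec ha 0
      simp only [Jg]
      norm_num at h ⊢
      convert h using 2
    have hc4 : Jg (2*B₀) 4 = 3/(2*(2*B₀)) * Jg (2*B₀) 2 := by
      have h := gauss_rec ha 2
      simp only [Jg]
      norm_num at h ⊢
      convert h using 2
    rw [hA, hD, hC, hc4, hc2]
    have hB0 : (2*B₀) ≠ 0 := by positivity
    push_cast
    field_simp
    ring
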